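/- Let f : (0,∞) → ℝ be an entropic function. Then for every natural number k the function G(ρ₁,…,ρ_k) = −Tr f(ρ₁ + ⋯ + ρ_k) + Tr f(ρ₁) + ⋯ + Tr f(ρ_k) is convex in k-tuples of positive definite operators ρ₁,…,ρ_k on any finite-dimensional Hilbert space; that is, every entropic function is subentropic. -/

import Mathlib

open scoped Matrix
open Matrix
open scoped ComplexOrder

noncomputable section

/-- The trace of `f` applied (by the functional calculus) to a Hermitian matrix,
computed via the eigenvalues.  Junk value `0` on non-Hermitian matrices. -/
def trFn (f : ℝ → ℝ) {d : Type} [Fintype d] [DecidableEq d] (ρ : Matrix d d ℂ) : ℝ :=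
  if hρ : ρ.IsHermitian then ∑ i, f (hρ.eigenvalues i) else 0

/-- `f` applied to a Hermitian matrix by the functional calculus (spectral theorem).
Junk value `0` on non-Hermitian matrices. -/
def matFn (f : ℝ → ℝ) {d : Type} [Fintype d] [DecidableEq d] (ρ : Matrix d d ℂ) :
    Matrix d d ℂ :=
  if hρ : ρ.IsHermitian then
    (hρ.eigenvectorUnitary : Matrix d d ℂ) *
      Matrix.diagonal (fun i => (f (hρ.eigenvalues i) : ℂ)) *
      star (hρ.eigenvectorUnitary : Matrix d d ℂ)
  else 0

/-- The partial trace over the second factor of a bipartite system `H₁ ⊗ H₂`,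
where operators on `H₁ ⊗ H₂` are modelled as matrices indexed by `Fin m × Fin n`. -/
def partialTrace {m n : ℕ} (ρ : Matrix (Fin m × Fin n) (Fin m × Fin n) ℂ) :
    Matrix (Fin m) (Fin m) ℂ :=
  Matrix.of fun i j => ∑ k : Fin n, ρ (i, k) (j, k)

/-- A convex function `f : (0,∞) → ℝ` is entropic if on every finite-dimensional
bipartite system the map `ρ ↦ -Tr f(ρ₁) + Tr f(ρ)` is convex in positive definite `ρ`,
where `ρ₁` is the partial trace of `ρ` on the first factor. -/
def IsEntropic (f : ℝ → ℝ) : Prop :=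
  ConvexOn ℝ (Set.Ioi (0 : ℝ)) f ∧
  ∀ m n : ℕ,
    ConvexOn ℝ {ρ : Matrix (Fin m × Fin n) (Fin m × Fin n) ℂ | ρ.PosDef}
      (fun ρ => - trFn f (partialTrace ρ) + trFn f ρ)

/-- A convex function `f : (0,∞) → ℝ` is subentropic of order `k` if
`G(ρ₁,…,ρ_k) = -Tr f(ρ₁+⋯+ρ_k) + Tr f(ρ₁) + ⋯ + Tr f(ρ_k)` is convex in `k`-tuples of
positive definite operators on any finite-dimensional Hilbert space. -/
def SubentropicOfOrder (f : ℝ → ℝ) (k : ℕ) : Prop :=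
  ConvexOn ℝ (Set.Ioi (0 : ℝ)) f ∧
  ∀ n : ℕ,
    ConvexOn ℝ {ρ : Fin k → Matrix (Fin n) (Fin n) ℂ | ∀ i, (ρ i).PosDef}
      (fun ρ => - trFn f (∑ i, ρ i) + ∑ i, trFn f (ρ i))

/-- A function is subentropic if it is subentropic of all orders. -/
def Subentropic (f : ℝ → ℝ) : Prop :=
  ∀ k : ℕ, SubentropicOfOrder f k

/-- Divided difference of `g`, with `g'` on the diagonal. -/
def divDiff (g : ℝ → ℝ) (x y : ℝ) : ℝ :=
  if x = y then deriv g x else (g x - g y) / (x - y)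

/-- Conjugation `h ↦ U * h * U*` as a linear operator on matrices. -/
def conjEnd {n : ℕ} (U : Matrix (Fin n) (Fin n) ℂ) :
    Module.End ℂ (Matrix (Fin n) (Fin n) ℂ) :=
  (LinearMap.mulLeft ℂ U).comp (LinearMap.mulRight ℂ (star U))

/-- Hadamard (entrywise) multiplication by a fixed matrix `L`, as a linear operator. -/
def hadamardEnd {n : ℕ} (L : Matrix (Fin n) (Fin n) ℂ) :
    Module.End ℂ (Matrix (Fin n) (Fin n) ℂ) where
  toFun h := L ⊙ h
  map_add' h₁ h₂ := Matrix.hadamard_add L h₁ h₂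
  map_smul' c h := Matrix.hadamard_smul L h c

/-- The Fréchet differential `dg(ρ)` of the matrix function induced by `g` at the
Hermitian matrix `ρ`: in a basis diagonalising `ρ` it acts as the Hadamard product
with the Löwner matrix of divided differences of `g`.  Junk value `0` at
non-Hermitian matrices. -/
def frechetDiff (g : ℝ → ℝ) {n : ℕ} (ρ : Matrix (Fin n) (Fin n) ℂ) :
    Module.End ℂ (Matrix (Fin n) (Fin n) ℂ) :=
  if hρ : ρ.IsHermitian then
    (conjEnd (hρ.eigenvectorUnitary : Matrix (Fin n) (Fin n) ℂ)).comp
      ((hadamardEnd (Matrix.of fun i j =>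
          (divDiff g (hρ.eigenvalues i) (hρ.eigenvalues j) : ℂ))).comp
        (conjEnd (star (hρ.eigenvectorUnitary : Matrix (Fin n) (Fin n) ℂ))))
  else 0

/-- The order, with respect to the trace inner product, between operators on `B(H)`:
`T ≤ S` iff `S - T` is a positive superoperator. -/
def endLE {n : ℕ} (T S : Module.End ℂ (Matrix (Fin n) (Fin n) ℂ)) : Prop :=
  ∀ h : Matrix (Fin n) (Fin n) ℂ, 0 ≤ Matrix.trace (star h * (S h - T h))

/-- The harmonic mean `H₂(A,B) = 2 (A⁻¹ + B⁻¹)⁻¹` of two (positive definite, hence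
invertible) operators on `B(H)`. -/
def harmonicMeanEnd {n : ℕ} (A B : Module.End ℂ (Matrix (Fin n) (Fin n) ℂ)) :
    Module.End ℂ (Matrix (Fin n) (Fin n) ℂ) :=
  (2 : ℂ) • Ring.inverse (Ring.inverse A + Ring.inverse B)

/-- The amplification `id_n ⊗ Φ` of a linear map on matrices. -/
def amplify {m k : ℕ} (Φ : Matrix (Fin m) (Fin m) ℂ →ₗ[ℂ] Matrix (Fin k) (Fin k) ℂ)
    (n : ℕ) (A : Matrix (Fin n × Fin m) (Fin n × Fin m) ℂ) :
    Matrix (Fin n × Fin k) (Fin n × Fin k) ℂ :=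
  Matrix.of fun p q => Φ (Matrix.of fun x y => A (p.1, x) (q.1, y)) p.2 q.2

/-- A linear map on matrices is completely positive if all its amplifications
preserve positive semidefiniteness. -/
def IsCompletelyPositive {m k : ℕ}
    (Φ : Matrix (Fin m) (Fin m) ℂ →ₗ[ℂ] Matrix (Fin k) (Fin k) ℂ) : Prop :=
  ∀ n : ℕ, ∀ A : Matrix (Fin n × Fin m) (Fin n × Fin m) ℂ,
    A.PosSemidef → (amplify Φ n A).PosSemidef

/-- A quantum channel is a completely positive trace preserving linear map. -/
def IsQuantumChannel {m k : ℕ}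
    (Φ : Matrix (Fin m) (Fin m) ℂ →ₗ[ℂ] Matrix (Fin k) (Fin k) ℂ) : Prop :=
  IsCompletelyPositive Φ ∧ ∀ A, (Φ A).trace = A.trace


open Polynomial in
lemma charpoly_conj_of_mul_eq_one {d : Type} [Fintype d] [DecidableEq d]
    (U V D : Matrix d d ℂ) (hUV : U * V = 1) :
    (U * D * V).charpoly = D.charpoly := by
  have hUV' : (U.map C) * (V.map C) = 1 := by
    rw [← Matrix.map_mul, hUV, Matrix.map_one _ (map_zero C) (map_one C)]
  have hsc : U.map C * Matrix.scalar d (X : ℂ[X]) * V.map C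
      = Matrix.scalar d (X : ℂ[X]) := by
    rw [((Matrix.scalar_commute (X : ℂ[X]) (fun r' => Commute.all _ _) (U.map C)).symm).eq,
      mul_assoc, hUV', mul_one]
  have hc : charmatrix (U * D * V) = U.map C * charmatrix D * V.map C := by
    simp only [charmatrix, RingHom.mapMatrix_apply]
    rw [mul_sub, sub_mul, hsc, ← Matrix.map_mul, ← Matrix.map_mul]
  rw [Matrix.charpoly, Matrix.charpoly, hc, det_mul, det_mul]
  have h1 : (U.map C).det * (V.map C).det = 1 := by
    rw [← det_mul, hUV', det_one]
  calc (U.map C).det * (charmatrix D).det * (V.map C).det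
      = (charmatrix D).det * ((U.map C).det * (V.map C).det) := by ring
    _ = (charmatrix D).det := by rw [h1, mul_one]

open Polynomial in
lemma charpoly_diagonal' {d : Type} [Fintype d] [DecidableEq d] (v : d → ℂ) :
    (Matrix.diagonal v).charpoly = ∏ i, (X - C (v i)) := by
  have h : charmatrix (Matrix.diagonal v) = Matrix.diagonal (fun i => (X : ℂ[X]) - C (v i)) := by
    ext i j
    by_cases hij : i = j
    · subst hij; simp [charmatrix_apply]
    · simp [charmatrix_apply, Matrix.diagonal_apply_ne _ hij]
  rw [Matrix.charpoly, h, det_diagonal]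

open Polynomial in
lemma roots_charpoly_of_isHermitian {d : Type} [Fintype d] [DecidableEq d]
    {ρ : Matrix d d ℂ} (hρ : ρ.IsHermitian) :
    ρ.charpoly.roots = Finset.univ.val.map (fun i => ((hρ.eigenvalues i : ℝ) : ℂ)) := by
  conv_lhs => rw [hρ.spectral_theorem, Unitary.conjStarAlgAut_apply]
  rw [charpoly_conj_of_mul_eq_one _ _ _
      ((Matrix.mem_unitaryGroup_iff).mp (hρ.eigenvectorUnitary).2), charpoly_diagonal']
  have h : (∏ i, ((X : ℂ[X]) - C ((RCLike.ofReal ∘ hρ.eigenvalues) i)))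
      = ((Finset.univ.val.map (fun i => ((hρ.eigenvalues i : ℝ) : ℂ))).map
          (fun a => (X : ℂ[X]) - C a)).prod := by
    rw [Multiset.map_map, Finset.prod_eq_multiset_prod]
    rfl
  rw [h, Polynomial.roots_multiset_prod_X_sub_C]

open Polynomial in
lemma trFn_eq_sum_roots {d : Type} [Fintype d] [DecidableEq d] (f : ℝ → ℝ)
    {ρ : Matrix d d ℂ} (hρ : ρ.IsHermitian) :
    trFn f ρ = ((ρ.charpoly.roots).map (fun z => f z.re)).sum := by
  rw [trFn, dif_pos hρ, roots_charpoly_of_isHermitian hρ, Multiset.map_map,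
    Finset.sum_eq_multiset_sum]
  simp [Function.comp_def]

open Polynomial in
lemma charpoly_blockDiagonal' {o d : Type} [Fintype o] [DecidableEq o] [Fintype d]
    [DecidableEq d] (M : o → Matrix d d ℂ) :
    (Matrix.blockDiagonal M).charpoly = ∏ a, (M a).charpoly := by
  have h : charmatrix (Matrix.blockDiagonal M)
      = Matrix.blockDiagonal (fun a => charmatrix (M a)) := by
    ext ⟨i, a⟩ ⟨j, b⟩
    by_cases hab : a = b
    · subst hab
      by_cases hij : i = j
      · subst hij; simp [charmatrix_apply, Matrix.blockDiagonal_apply]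
      · simp [charmatrix_apply, Matrix.blockDiagonal_apply, Matrix.diagonal_apply,
          Prod.ext_iff, hij]
    · simp [charmatrix_apply, Matrix.blockDiagonal_apply, Matrix.diagonal_apply,
        Prod.ext_iff, hab]
  rw [Matrix.charpoly, h, Matrix.det_blockDiagonal]
  rfl

lemma trFn_blockDiagonal {o d : Type} [Fintype o] [DecidableEq o] [Fintype d]
    [DecidableEq d] (f : ℝ → ℝ) (ρ : o → Matrix d d ℂ) (h : ∀ a, (ρ a).IsHermitian) :
    trFn f (Matrix.blockDiagonal ρ) = ∑ a, trFn f (ρ a) := by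
  have hbd : (Matrix.blockDiagonal ρ).IsHermitian := by
    rw [Matrix.IsHermitian, Matrix.blockDiagonal_conjTranspose]
    exact congrArg _ (funext fun a => h a)
  have hne : (∏ a, (ρ a).charpoly) ≠ 0 :=
    Finset.prod_ne_zero_iff.mpr fun a _ => (Matrix.charpoly_monic (ρ a)).ne_zero
  rw [trFn_eq_sum_roots f hbd, charpoly_blockDiagonal',
    Polynomial.roots_prod _ _ hne, Multiset.map_bind, Multiset.sum_bind]
  rw [show (∑ a, trFn f (ρ a)) = ∑ a, (((ρ a).charpoly.roots).map (fun z => f z.re)).sum from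
    Finset.sum_congr rfl fun a _ => trFn_eq_sum_roots f (h a)]
  rw [Finset.sum_eq_multiset_sum]

lemma blockDiagonal_posDef {n k : ℕ} {ρ : Fin k → Matrix (Fin n) (Fin n) ℂ}
    (h : ∀ a, (ρ a).PosDef) : (Matrix.blockDiagonal ρ).PosDef := by
  refine Matrix.PosDef.of_dotProduct_mulVec_pos ?_ fun x hx => ?_
  · rw [Matrix.IsHermitian, Matrix.blockDiagonal_conjTranspose]
    exact congrArg _ (funext fun a => (h a).1)
  · have key : dotProduct (star x) (Matrix.blockDiagonal ρ *ᵥ x)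
        = ∑ a, dotProduct (star (fun i => x (i, a))) (ρ a *ᵥ fun i => x (i, a)) := by
      simp only [dotProduct, Matrix.mulVec, Matrix.blockDiagonal_apply,
        Fintype.sum_prod_type, Pi.star_apply, ite_mul, zero_mul, Finset.sum_ite_eq,
        Finset.mem_univ, if_true]
      exact Finset.sum_comm
    rw [key]
    obtain ⟨⟨i0, a0⟩, hp⟩ := Function.ne_iff.mp hx
    refine Finset.sum_pos' (fun a _ => ((h a).posSemidef).dotProduct_mulVec_nonneg _)
      ⟨a0, Finset.mem_univ _, (h a0).dotProduct_mulVec_pos fun hzero => hp (congrFun hzero i0)⟩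

lemma Matrix.PosDef.rsmul {n : ℕ} {A : Matrix (Fin n) (Fin n) ℂ} (hA : A.PosDef)
    {a : ℝ} (ha : 0 < a) : (a • A).PosDef := by
  refine Matrix.PosDef.of_dotProduct_mulVec_pos ?_ fun x hx => ?_
  · rw [Matrix.IsHermitian, Matrix.conjTranspose_smul, star_trivial, hA.1]
  · rw [Matrix.smul_mulVec, dotProduct_smul]
    have h0 := hA.dotProduct_mulVec_pos hx
    rw [Complex.lt_def] at h0 ⊢
    refine ⟨?_, ?_⟩
    · simpa [Complex.smul_re] using mul_pos ha h0.1
    · simp [Complex.smul_im, ← h0.2]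


/-- Every entropic function is subentropic: for every `k` the function
`G(ρ₁,…,ρ_k) = -Tr f(ρ₁+⋯+ρ_k) + Tr f(ρ₁) + ⋯ + Tr f(ρ_k)` is convex in `k`-tuples
of positive definite operators on any finite-dimensional Hilbert space. -/
theorem entropic_implies_subentropic (f : ℝ → ℝ) (hf : IsEntropic f) :
    Subentropic f := by
  intro k
  refine ⟨hf.1, fun n => ?_⟩
  have hmain := hf.2 n k
  have hconv : Convex ℝ {ρ : Fin k → Matrix (Fin n) (Fin n) ℂ | ∀ i, (ρ i).PosDef} := by
    intro x hx y hy a b ha hb hab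
    intro i
    simp only [Pi.add_apply, Pi.smul_apply]
    rcases ha.lt_or_eq with ha' | ha'
    · rcases hb.lt_or_eq with hb' | hb'
      · exact ((hx i).rsmul ha').add_posSemidef ((hy i).rsmul hb').posSemidef
      · have ha1 : a = 1 := by linarith
        rw [← hb', ha1]
        simpa using hx i
    · have hb1 : b = 1 := by linarith
      rw [← ha', hb1]
      simpa using hy i
  refine ⟨hconv, ?_⟩
  intro x hx y hy a b ha hb hab
  have hG : ∀ ρ : Fin k → Matrix (Fin n) (Fin n) ℂ, (∀ i, (ρ i).IsHermitian) →
      - trFn f (partialTrace (Matrix.blockDiagonal ρ)) + trFn f (Matrix.blockDiagonal ρ)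
        = - trFn f (∑ i, ρ i) + ∑ i, trFn f (ρ i) := by
    intro ρ hρ
    have hpt : partialTrace (Matrix.blockDiagonal ρ) = ∑ i, ρ i := by
      ext i j
      simp [partialTrace, Matrix.blockDiagonal_apply, Matrix.sum_apply]
    rw [hpt, trFn_blockDiagonal f ρ hρ]
  have hxyz : ∀ i, ((a • x + b • y) i).PosDef := hconv hx hy ha hb hab
  have hbd : Matrix.blockDiagonal (a • x + b • y)
      = a • Matrix.blockDiagonal x + b • Matrix.blockDiagonal y := by
    rw [Matrix.blockDiagonal_add, Matrix.blockDiagonal_smul, Matrix.blockDiagonal_smul]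
  have hineq := hmain.2 (Set.mem_setOf.mpr (blockDiagonal_posDef hx))
    (Set.mem_setOf.mpr (blockDiagonal_posDef hy)) ha hb hab
  simp only at hineq ⊢
  rw [← hbd] at hineq
  rw [hG x (fun i => (hx i).1), hG y (fun i => (hy i).1),
    hG _ (fun i => (hxyz i).1)] at hineq
  exact hineq

end
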